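/- Let 1 ≤ p < ∞, 0 < ϑ < 1 and C_θ > 0. For η ≥ 0 and t > 0 set ν := |α|²η²p²/Re α, C₄(t) := C_θ · a₁^{d/2} · e^{−b₀ t} · (I_{d−1}(νt))^{1/p} and C₅(t) := C_θ · a₁^{(d+1)/2} · e^{−b₀ t} · (t|α|)^{−1/2} · (I_d(νt))^{1/p}. Then there exist constants C₇ > 0 and C₈ > 0, depending only on d, p, ϑ, C_θ and a₁ (and in particular not on ω, λ or η), such that for every ω ∈ ℝ with ω ≥ −b₀, every λ ∈ ℂ with Re λ > ω, and every η ≥ 0 with η² ≤ ϑ · Re α · (Re λ − ω)/(|α|² p²), one has ∫_0^∞ e^{−(Re λ) t} C₄(t) dt ≤ C₇/(Re λ − ω) and ∫_0^∞ e^{−(Re λ) t} C₅(t) dt ≤ C₈/(Re λ − ω)^{1/2}. -/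

import Mathlib

open MeasureTheory

/-- `I_m(μ) = (2/Γ(d/2)) ∫_0^∞ s^m e^{-s² + 2√μ s} ds`. -/
noncomputable def ouI (d m : ℕ) (μ : ℝ) : ℝ :=
  (2 / Real.Gamma ((d : ℝ) / 2)) *
    ∫ s in Set.Ioi (0 : ℝ), s ^ m * Real.exp (-s ^ 2 + 2 * Real.sqrt μ * s)

open Real Set

lemma gauss_shift_integrable (h : ℝ) :
    Integrable (fun s : ℝ => Real.exp (-(s - h) ^ 2)) := by
  have h1 := (integrable_exp_neg_mul_sq (b := (1:ℝ)) one_pos)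
  have := h1.comp_sub_right h
  simpa using this

lemma gauss_shift_integral (h : ℝ) :
    ∫ s : ℝ, Real.exp (-(s - h) ^ 2) = Real.sqrt π := by
  have := integral_sub_right_eq_self (μ := volume) (fun s : ℝ => Real.exp (-s ^ 2)) h
  rw [this]
  simpa using integral_gaussian 1

lemma key_int_le (m : ℕ) (b : ℝ) :
    ∫ s in Set.Ioi (0:ℝ), s ^ m * Real.exp (-s ^ 2 + b * s)
      ≤ (m.factorial : ℝ) * Real.exp ((b + 1) ^ 2 / 4) * Real.sqrt π := by
  set h : ℝ := (b + 1) / 2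
  set C : ℝ := (m.factorial : ℝ) * Real.exp ((b + 1) ^ 2 / 4)
  have hC : 0 < C := by positivity
  have hint : Integrable (fun s : ℝ => C * Real.exp (-(s - h) ^ 2)) :=
    (gauss_shift_integrable h).const_mul C
  have step1 : ∫ s in Set.Ioi (0:ℝ), s ^ m * Real.exp (-s ^ 2 + b * s)
      ≤ ∫ s in Set.Ioi (0:ℝ), C * Real.exp (-(s - h) ^ 2) := by
    apply integral_mono_of_nonneg
    · filter_upwards [self_mem_ae_restrict (measurableSet_Ioi (a := (0:ℝ)))] with s hs
      have : (0:ℝ) < s := hs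
      positivity
    · exact hint.restrict
    · filter_upwards [self_mem_ae_restrict (measurableSet_Ioi (a := (0:ℝ)))] with s hs
      have hs0 : (0:ℝ) ≤ s := le_of_lt hs
      have h1 : s ^ m ≤ (m.factorial : ℝ) * Real.exp s := by
        have := Real.pow_div_factorial_le_exp (x := s) hs0 m
        have hf : (0:ℝ) < (m.factorial : ℝ) := by positivity
        calc s ^ m = s ^ m / (m.factorial : ℝ) * (m.factorial : ℝ) := by field_simp
        _ ≤ Real.exp s * (m.factorial : ℝ) := by
            exact mul_le_mul_of_nonneg_right this hf.le
        _ = (m.factorial : ℝ) * Real.exp s := by ring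
      calc s ^ m * Real.exp (-s ^ 2 + b * s)
          ≤ (m.factorial : ℝ) * Real.exp s * Real.exp (-s ^ 2 + b * s) :=
            mul_le_mul_of_nonneg_right h1 (Real.exp_nonneg _)
        _ = C * Real.exp (-(s - h) ^ 2) := by
            rw [mul_assoc, ← Real.exp_add]
            rw [mul_assoc (m.factorial : ℝ), ← Real.exp_add]
            congr 1
            simp only [h]
            ring
  have step2 : ∫ s in Set.Ioi (0:ℝ), C * Real.exp (-(s - h) ^ 2)
      ≤ ∫ s : ℝ, C * Real.exp (-(s - h) ^ 2) := by
    apply setIntegral_le_integral hint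
    filter_upwards with s
    positivity
  have step3 : ∫ s : ℝ, C * Real.exp (-(s - h) ^ 2) = C * Real.sqrt π := by
    rw [MeasureTheory.integral_const_mul, gauss_shift_integral]
  linarith [step1, step2, step3.le, step3.ge]

lemma ouI_nonneg (d m : ℕ) (μ : ℝ) : 0 ≤ ouI d m μ := by
  unfold ouI
  have h1 : 0 ≤ 2 / Real.Gamma ((d:ℝ) / 2) := by
    have := Real.Gamma_nonneg_of_nonneg (s := (d:ℝ)/2) (by positivity)
    positivity
  refine mul_nonneg h1 (setIntegral_nonneg measurableSet_Ioi fun s hs => ?_)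
  have : (0:ℝ) < s := hs
  positivity

lemma ouI_le (d m : ℕ) (μ ε : ℝ) (hμ : 0 ≤ μ) (hε : 0 < ε) :
    ouI d m μ ≤ (2 / Real.Gamma ((d:ℝ) / 2)) * ((m.factorial : ℝ) *
      Real.exp (1 / (2 * ε) + 1 / 4) * Real.sqrt π) * Real.exp ((1 + ε / 2) * μ) := by
  have hΓ : 0 ≤ 2 / Real.Gamma ((d:ℝ) / 2) := by
    have := Real.Gamma_nonneg_of_nonneg (s := (d:ℝ)/2) (by positivity)
    positivity
  unfold ouI
  rw [mul_assoc]
  refine mul_le_mul_of_nonneg_left ?_ hΓ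
  have key := key_int_le m (2 * Real.sqrt μ)
  have hsq : Real.sqrt μ ^ 2 = μ := Real.sq_sqrt hμ
  have hs0 : 0 ≤ Real.sqrt μ := Real.sqrt_nonneg μ
  have hexp : Real.exp ((2 * Real.sqrt μ + 1) ^ 2 / 4)
      ≤ Real.exp (1 / (2 * ε) + 1 / 4 + (1 + ε / 2) * μ) := by
    apply Real.exp_le_exp.mpr
    have hkey : Real.sqrt μ ≤ ε * μ / 2 + 1 / (2 * ε) := by
      rw [div_add_div _ _ (by norm_num) (by positivity), le_div_iff₀ (by positivity)]
      nlinarith [sq_nonneg (ε * Real.sqrt μ - 1), hsq, sq_nonneg ε, hε]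
    nlinarith [hkey]
  calc ∫ s in Set.Ioi (0:ℝ), s ^ m * Real.exp (-s ^ 2 + 2 * Real.sqrt μ * s)
      ≤ (m.factorial : ℝ) * Real.exp ((2 * Real.sqrt μ + 1) ^ 2 / 4) * Real.sqrt π := key
    _ ≤ (m.factorial : ℝ) * Real.exp (1 / (2 * ε) + 1 / 4 + (1 + ε / 2) * μ) * Real.sqrt π := by
        refine mul_le_mul_of_nonneg_right (mul_le_mul_of_nonneg_left hexp (by positivity)) ?_
        positivity
    _ = (m.factorial : ℝ) * Real.exp (1 / (2 * ε) + 1 / 4) * Real.sqrt π *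
          Real.exp ((1 + ε / 2) * μ) := by
        rw [Real.exp_add]; ring


set_option maxHeartbeats 2000000 in
/-- bounds for the Laplace-type integrals of `C₄` and `C₅`, with constants
independent of `ω`, `λ` and `η`. -/
theorem laplace_integral_bounds_C4_C5
    (d : ℕ) (hd : 1 ≤ d) (α : ℂ) (hα : 0 < α.re)
    (p : ℝ) (hp : 1 ≤ p) (ϑ : ℝ) (hϑ₀ : 0 < ϑ) (hϑ₁ : ϑ < 1)
    (Cθ : ℝ) (hCθ : 0 < Cθ) :
    ∃ C₇ > (0:ℝ), ∃ C₈ > (0:ℝ), ∀ δ : ℂ, ∀ ω : ℝ, -δ.re ≤ ω →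
      ∀ lam : ℂ, ω < lam.re →
      ∀ η : ℝ, 0 ≤ η →
        η ^ 2 ≤ ϑ * (α.re * (lam.re - ω)) / (‖α‖ ^ 2 * p ^ 2) →
      (∫ t in Set.Ioi (0:ℝ), Real.exp (-lam.re * t) *
          (Cθ * (‖α‖ / α.re) ^ ((d : ℝ) / 2) * Real.exp (-δ.re * t) *
            (ouI d (d - 1) ((‖α‖ ^ 2 * η ^ 2 * p ^ 2 / α.re) * t)) ^ (1 / p)))
        ≤ C₇ / (lam.re - ω) ∧
      (∫ t in Set.Ioi (0:ℝ), Real.exp (-lam.re * t) *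
          (Cθ * (‖α‖ / α.re) ^ (((d : ℝ) + 1) / 2) * Real.exp (-δ.re * t) *
            (t * ‖α‖) ^ (-(1:ℝ) / 2) *
            (ouI d d ((‖α‖ ^ 2 * η ^ 2 * p ^ 2 / α.re) * t)) ^ (1 / p)))
        ≤ C₈ / Real.sqrt (lam.re - ω) := by
  have hp0 : (0:ℝ) < p := lt_of_lt_of_le one_pos hp
  have hαne : α ≠ 0 := fun h => by simp [h] at hα
  have habs : 0 < ‖α‖ := norm_pos_iff.mpr hαne
  set ε : ℝ := (1 - ϑ) / ϑ with hεdef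
  have hε : 0 < ε := div_pos (by linarith) hϑ₀
  set θ : ℝ := (1 + ϑ) / 2 with hθdef
  have hθ1 : θ < 1 := by rw [hθdef]; linarith
  have hθ0 : 0 < θ := by rw [hθdef]; linarith
  have ha : 0 < 1 - θ := by linarith
  have hcθ : (1 + ε / 2) * ϑ = θ := by
    rw [hεdef, hθdef]; field_simp; ring
  have hΓ : 0 < Real.Gamma ((d:ℝ) / 2) := by
    apply Real.Gamma_pos_of_pos
    have : (1:ℝ) ≤ (d:ℝ) := by exact_mod_cast hd
    linarith
  set K₁ : ℝ := (2 / Real.Gamma ((d:ℝ) / 2)) * (((d-1).factorial : ℝ) *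
      Real.exp (1 / (2 * ε) + 1 / 4) * Real.sqrt π) with hK₁def
  set K₂ : ℝ := (2 / Real.Gamma ((d:ℝ) / 2)) * ((d.factorial : ℝ) *
      Real.exp (1 / (2 * ε) + 1 / 4) * Real.sqrt π) with hK₂def
  have hK₁ : 0 < K₁ := by rw [hK₁def]; positivity
  have hK₂ : 0 < K₂ := by rw [hK₂def]; positivity
  set A₁ : ℝ := Cθ * (‖α‖ / α.re) ^ ((d : ℝ) / 2) * K₁ ^ (1/p) with hA₁def
  set A₂ : ℝ := Cθ * (‖α‖ / α.re) ^ (((d : ℝ) + 1) / 2) *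
      (‖α‖) ^ (-(1:ℝ)/2) * K₂ ^ (1/p) with hA₂def
  have hA₁ : 0 < A₁ := by
    rw [hA₁def]
    have h1 : (0:ℝ) < ‖α‖ / α.re := div_pos habs hα
    positivity
  have hA₂ : 0 < A₂ := by
    rw [hA₂def]
    have h1 : (0:ℝ) < ‖α‖ / α.re := div_pos habs hα
    positivity
  refine ⟨A₁ / (1 - θ), by positivity, A₂ * Real.sqrt π / Real.sqrt (1 - θ), by positivity,
    fun δ ω hδω lam hlam η hη hη2 => ?_⟩
  set X : ℝ := lam.re - ω with hXdef
  have hX : 0 < X := by rw [hXdef]; linarith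
  set ν : ℝ := ‖α‖ ^ 2 * η ^ 2 * p ^ 2 / α.re with hνdef
  have hν0 : 0 ≤ ν := by rw [hνdef]; positivity
  have hν : ν ≤ ϑ * X := by
    rw [le_div_iff₀ (by positivity)] at hη2
    rw [hνdef, div_le_iff₀ hα]
    nlinarith [hη2]
  set r : ℝ := (1 - θ) * X with hrdef
  have hr : 0 < r := mul_pos ha hX
  have hXsum : X ≤ lam.re + δ.re := by rw [hXdef]; linarith
  have hp1 : 1 / p ≤ 1 := by rw [div_le_one hp0]; exact hp
  -- generic pointwise bound for the ouI factor
  have hOU : ∀ (m : ℕ) (K : ℝ), 0 < K →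
      K = (2 / Real.Gamma ((d:ℝ) / 2)) * ((m.factorial : ℝ) *
        Real.exp (1 / (2 * ε) + 1 / 4) * Real.sqrt π) →
      ∀ t : ℝ, 0 < t →
      (ouI d m (ν * t)) ^ (1/p) ≤ K ^ (1/p) * Real.exp (θ * X * t) := by
    intro m K hK hKdef t ht
    have h1 : ouI d m (ν * t) ≤ K * Real.exp ((1 + ε / 2) * (ν * t)) := by
      rw [hKdef]; exact ouI_le d m (ν * t) ε (by positivity) hε
    have h2 := Real.rpow_le_rpow (ouI_nonneg d m (ν * t)) h1 (by positivity : (0:ℝ) ≤ 1/p)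
    rw [Real.mul_rpow hK.le (Real.exp_nonneg _), ← Real.exp_mul] at h2
    refine h2.trans (mul_le_mul_of_nonneg_left (Real.exp_le_exp.mpr ?_) (by positivity))
    have h3 : (1 + ε / 2) * (ν * t) * (1/p) ≤ (1 + ε / 2) * (ν * t) :=
      mul_le_of_le_one_right (by positivity) hp1
    have h4 : (1 + ε / 2) * (ν * t) ≤ (1 + ε / 2) * ((ϑ * X) * t) :=
      mul_le_mul_of_nonneg_left (mul_le_mul_of_nonneg_right hν ht.le) (by positivity)
    have h5 : (1 + ε / 2) * ((ϑ * X) * t) = θ * X * t := by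
      rw [← hcθ]; ring
    linarith
  have hexp3 : ∀ t : ℝ, 0 < t →
      Real.exp (-lam.re * t) * Real.exp (-δ.re * t) * Real.exp (θ * X * t)
        ≤ Real.exp (-r * t) := by
    intro t ht
    rw [← Real.exp_add, ← Real.exp_add, Real.exp_le_exp]
    rw [hrdef]
    nlinarith [mul_nonneg (sub_nonneg.mpr hXsum) ht.le]
  constructor
  · -- first integral
    have hmono : ∫ t in Set.Ioi (0:ℝ), Real.exp (-lam.re * t) *
          (Cθ * (‖α‖ / α.re) ^ ((d : ℝ) / 2) * Real.exp (-δ.re * t) *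
            (ouI d (d - 1) (ν * t)) ^ (1 / p))
        ≤ ∫ t in Set.Ioi (0:ℝ), A₁ * Real.exp (-r * t) := by
      apply integral_mono_of_nonneg
      · filter_upwards [self_mem_ae_restrict (measurableSet_Ioi (a := (0:ℝ)))] with t ht
        have h1 : (0:ℝ) ≤ ‖α‖ / α.re := (div_pos habs hα).le
        have h2 := ouI_nonneg d (d-1) (ν * t)
        positivity
      · exact ((exp_neg_integrableOn_Ioi 0 hr).const_mul A₁)
      · filter_upwards [self_mem_ae_restrict (measurableSet_Ioi (a := (0:ℝ)))] with t ht
        have ht : (0:ℝ) < t := ht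
        have h1 := hOU (d-1) K₁ hK₁ hK₁def t ht
        have hP : (0:ℝ) ≤ Cθ * (‖α‖ / α.re) ^ ((d : ℝ) / 2) := by
          have : (0:ℝ) < ‖α‖ / α.re := div_pos habs hα
          positivity
        calc Real.exp (-lam.re * t) *
              (Cθ * (‖α‖ / α.re) ^ ((d : ℝ) / 2) * Real.exp (-δ.re * t) *
                (ouI d (d - 1) (ν * t)) ^ (1 / p))
            ≤ Real.exp (-lam.re * t) *
              (Cθ * (‖α‖ / α.re) ^ ((d : ℝ) / 2) * Real.exp (-δ.re * t) *
                (K₁ ^ (1/p) * Real.exp (θ * X * t))) := by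
              apply mul_le_mul_of_nonneg_left _ (Real.exp_nonneg _)
              apply mul_le_mul_of_nonneg_left h1
              positivity
          _ = (Cθ * (‖α‖ / α.re) ^ ((d : ℝ) / 2) * K₁ ^ (1/p)) *
              (Real.exp (-lam.re * t) * Real.exp (-δ.re * t) * Real.exp (θ * X * t)) := by
              ring
          _ ≤ (Cθ * (‖α‖ / α.re) ^ ((d : ℝ) / 2) * K₁ ^ (1/p)) *
              Real.exp (-r * t) := by
              apply mul_le_mul_of_nonneg_left (hexp3 t ht)
              have : (0:ℝ) < ‖α‖ / α.re := div_pos habs hα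
              positivity
          _ = A₁ * Real.exp (-r * t) := by rw [hA₁def]
    have hval : ∫ t in Set.Ioi (0:ℝ), A₁ * Real.exp (-r * t) = A₁ * (1/r) := by
      rw [MeasureTheory.integral_const_mul]
      congr 1
      have h := integral_rpow_mul_exp_neg_mul_Ioi (a := (1:ℝ)) one_pos hr
      simpa [Real.Gamma_one, Real.rpow_one, neg_mul] using h
    calc _ ≤ A₁ * (1/r) := by rw [← hval]; exact hmono
      _ = A₁ / (1 - θ) / X := by rw [hrdef, mul_one_div, div_div]
  · -- second integral
    have hint2 : IntegrableOn (fun t : ℝ => t ^ (-(1:ℝ)/2) * Real.exp (-r * t))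
        (Set.Ioi (0:ℝ)) := by
      have h := integrableOn_rpow_mul_exp_neg_mul_rpow
        (s := -(1:ℝ)/2) (p := 1) (by norm_num) one_pos hr
      simpa [Real.rpow_one] using h
    have hmono : ∫ t in Set.Ioi (0:ℝ), Real.exp (-lam.re * t) *
          (Cθ * (‖α‖ / α.re) ^ (((d : ℝ) + 1) / 2) * Real.exp (-δ.re * t) *
            (t * ‖α‖) ^ (-(1:ℝ) / 2) *
            (ouI d d (ν * t)) ^ (1 / p))
        ≤ ∫ t in Set.Ioi (0:ℝ), A₂ * (t ^ (-(1:ℝ)/2) * Real.exp (-r * t)) := by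
      apply integral_mono_of_nonneg
      · filter_upwards [self_mem_ae_restrict (measurableSet_Ioi (a := (0:ℝ)))] with t ht
        have ht : (0:ℝ) < t := ht
        have h1 : (0:ℝ) ≤ ‖α‖ / α.re := (div_pos habs hα).le
        have h2 := ouI_nonneg d d (ν * t)
        have h3 : (0:ℝ) < t * ‖α‖ := by positivity
        positivity
      · exact hint2.const_mul A₂
      · filter_upwards [self_mem_ae_restrict (measurableSet_Ioi (a := (0:ℝ)))] with t ht
        have ht : (0:ℝ) < t := ht
        have h1 := hOU d K₂ hK₂ hK₂def t ht
        have hsplit : (t * ‖α‖) ^ (-(1:ℝ) / 2)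
            = t ^ (-(1:ℝ)/2) * (‖α‖) ^ (-(1:ℝ)/2) :=
          Real.mul_rpow ht.le habs.le
        have hPd : (0:ℝ) < ‖α‖ / α.re := div_pos habs hα
        calc Real.exp (-lam.re * t) *
              (Cθ * (‖α‖ / α.re) ^ (((d : ℝ) + 1) / 2) * Real.exp (-δ.re * t) *
                (t * ‖α‖) ^ (-(1:ℝ) / 2) * (ouI d d (ν * t)) ^ (1 / p))
            ≤ Real.exp (-lam.re * t) *
              (Cθ * (‖α‖ / α.re) ^ (((d : ℝ) + 1) / 2) * Real.exp (-δ.re * t) *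
                (t * ‖α‖) ^ (-(1:ℝ) / 2) *
                (K₂ ^ (1/p) * Real.exp (θ * X * t))) := by
              apply mul_le_mul_of_nonneg_left _ (Real.exp_nonneg _)
              apply mul_le_mul_of_nonneg_left h1
              have h3 : (0:ℝ) < t * ‖α‖ := by positivity
              positivity
          _ = A₂ * (t ^ (-(1:ℝ)/2) *
              (Real.exp (-lam.re * t) * Real.exp (-δ.re * t) * Real.exp (θ * X * t))) := by
              rw [hsplit, hA₂def]; ring
          _ ≤ A₂ * (t ^ (-(1:ℝ)/2) * Real.exp (-r * t)) := by
              apply mul_le_mul_of_nonneg_left _ hA₂.le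
              exact mul_le_mul_of_nonneg_left (hexp3 t ht) (Real.rpow_nonneg ht.le _)
    have hval : ∫ t in Set.Ioi (0:ℝ), A₂ * (t ^ (-(1:ℝ)/2) * Real.exp (-r * t))
        = A₂ * (Real.sqrt π / Real.sqrt r) := by
      rw [MeasureTheory.integral_const_mul]
      congr 1
      have h := integral_rpow_mul_exp_neg_mul_Ioi (a := (1:ℝ)/2) (by norm_num) hr
      have he : ((1:ℝ)/2 - 1) = -(1:ℝ)/2 := by norm_num
      rw [he] at h
      rw [show (fun t : ℝ => t ^ (-(1:ℝ)/2) * Real.exp (-r * t))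
          = (fun t : ℝ => t ^ (-(1:ℝ)/2) * Real.exp (-(r * t))) by funext t; rw [neg_mul]]
      rw [h, Real.Gamma_one_half_eq, ← Real.sqrt_eq_rpow, one_div, Real.sqrt_inv]
      rw [div_eq_mul_inv, mul_comm]
    calc _ ≤ A₂ * (Real.sqrt π / Real.sqrt r) := by rw [← hval]; exact hmono
      _ = A₂ * Real.sqrt π / Real.sqrt (1 - θ) / Real.sqrt X := by
          rw [hrdef, Real.sqrt_mul ha.le, ← div_div]; ring
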